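/- Under Assumption 1, for U = S·U1 + (1−S)·U0 one has E[S·U1 + (1−S)·U0 | X, P = p] = E[U | P = p], i.e. the conditional expectation of U given (X,P) does not depend on X. -/

import Mathlib

open MeasureTheory ProbabilityTheory

lemma roy_level_null {Ω : Type*} [MeasurableSpace Ω] (μ : Measure Ω) [IsProbabilityMeasure μ]
    (US : Ω → ℝ) (hUS : Measurable US) (habs : Measure.map US μ ≪ volume)
    (F : ℝ → ℝ) (hF : ∀ t, F t = (μ {ω | US ω ≤ t}).toReal) (t : ℝ) :
    μ {ω | US ω < t ∧ F (US ω) = F t} = 0 := by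
  have hfin : ∀ s : ℝ, μ {ω | US ω ≤ s} ≠ ⊤ := fun s => measure_ne_top μ _
  have hatom : ∀ c : ℝ, μ {ω | US ω = c} = 0 := by
    intro c
    have h1 : μ (US ⁻¹' {c}) = Measure.map US μ {c} :=
      (Measure.map_apply hUS (measurableSet_singleton c)).symm
    have h2 : Measure.map US μ {c} = 0 := habs (by simp)
    simpa [Set.preimage, Set.mem_singleton_iff] using h1.trans h2
  have hIoc : ∀ s : ℝ, s < t → F s = F t → μ {ω | s < US ω ∧ US ω ≤ t} = 0 := by
    intro s hst hFs
    have hsub : {ω | US ω ≤ s} ⊆ {ω | US ω ≤ t} := fun ω h => le_trans h hst.le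
    have hmeq : μ {ω | US ω ≤ s} = μ {ω | US ω ≤ t} :=
      (ENNReal.toReal_eq_toReal_iff' (hfin s) (hfin t)).mp (by rw [← hF s, ← hF t, hFs])
    have hset : {ω | s < US ω ∧ US ω ≤ t} = {ω | US ω ≤ t} \ {ω | US ω ≤ s} := by
      ext ω; simp only [Set.mem_setOf_eq, Set.mem_diff, not_le]; tauto
    rw [hset, measure_diff hsub ((hUS measurableSet_Iic)).nullMeasurableSet (hfin s), ← hmeq,
      tsub_self]
  -- the rational cover
  set Sq : ℚ → Set Ω := fun q =>
    if ((q : ℝ) < t ∧ F q = F t) then {ω | (q : ℝ) < US ω ∧ US ω ≤ t} else ∅ with hSqdef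
  have hSq : ∀ q : ℚ, μ (Sq q) = 0 := by
    intro q
    by_cases h : ((q : ℝ) < t ∧ F q = F t)
    · simp only [hSqdef, if_pos h]; exact hIoc q h.1 h.2
    · simp [hSqdef, if_neg h]
  have hmono : Monotone F := fun a b hab => by
    rw [hF a, hF b]
    exact ENNReal.toReal_mono (hfin b) (measure_mono fun ω h => le_trans h hab)
  have hkey : ∀ ω, US ω < t → F (US ω) = F t → (∃ s, s < t ∧ F s = F t ∧ s < US ω) →
      ω ∈ ⋃ q, Sq q := by
    rintro ω h1 h2 ⟨s, hs1, hs2, hs3⟩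
    obtain ⟨q, hq1, hq2⟩ := exists_rat_btwn hs3
    have hqt : (q : ℝ) < t := hq2.trans h1
    have hqF : F q = F t :=
      le_antisymm (hmono hqt.le) (hs2 ▸ hmono hq1.le)
    refine Set.mem_iUnion.mpr ⟨q, ?_⟩
    simp only [hSqdef, if_pos (⟨hqt, hqF⟩ : (q : ℝ) < t ∧ F q = F t)]
    exact ⟨hq2, h1.le⟩
  by_cases hmin : ∃ m : ℝ, (m < t ∧ F m = F t) ∧ ∀ s, s < t → F s = F t → m ≤ s
  · obtain ⟨m, hmB, hmle⟩ := hmin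
    have hcover : {ω | US ω < t ∧ F (US ω) = F t} ⊆ {ω | US ω = m} ∪ ⋃ q, Sq q := by
      rintro ω ⟨h1, h2⟩
      by_cases hm : US ω = m
      · exact Or.inl hm
      · have hlt : m < US ω := lt_of_le_of_ne (hmle _ h1 h2) (Ne.symm hm)
        exact Or.inr (hkey ω h1 h2 ⟨m, hmB.1, hmB.2, hlt⟩)
    refine measure_mono_null hcover ?_
    exact measure_union_null (hatom m) (measure_iUnion_null hSq)
  · have hcover : {ω | US ω < t ∧ F (US ω) = F t} ⊆ ⋃ q, Sq q := by
      rintro ω ⟨h1, h2⟩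
      push_neg at hmin
      obtain ⟨s, hs1, hs2, hs3⟩ := hmin (US ω) ⟨h1, h2⟩
      exact hkey ω h1 h2 ⟨s, hs1, hs2, hs3⟩
    exact measure_mono_null hcover (measure_iUnion_null hSq)

noncomputable def royG {Ω : Type*} [MeasurableSpace Ω] (μ : Measure Ω)
    (V h : Ω → ℝ) (p : ℝ) : ℝ := ∫ ω, (if V ω < p then h ω else 0) ∂μ

lemma royG_int {Ω : Type*} [MeasurableSpace Ω] {μ : Measure Ω}
    {V h : Ω → ℝ} (hV : Measurable V) (hh : Integrable h μ) (p : ℝ) :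
    Integrable (fun ω => if V ω < p then h ω else 0) μ := by
  have : (fun ω => if V ω < p then h ω else 0) = Set.indicator {ω | V ω < p} h := by
    funext ω; rw [Set.indicator_apply]; rfl
  rw [this]
  exact hh.indicator (measurableSet_lt hV measurable_const)

lemma royG_measurable {Ω : Type*} [MeasurableSpace Ω] {μ : Measure Ω}
    {V h : Ω → ℝ} (hV : Measurable V) (hh : Integrable h μ) :
    Measurable (royG μ V h) := by
  have hpos : Integrable (fun ω => max (h ω) 0) μ := hh.pos_part
  have hneg : Integrable (fun ω => max (-h ω) 0) μ := hh.neg_part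
  have hm : ∀ (k : Ω → ℝ), Integrable k μ → (∀ ω, 0 ≤ k ω) →
      Monotone (fun p => ∫ ω, (if V ω < p then k ω else 0) ∂μ) := by
    intro k hk hk0 p p' hpp'
    refine integral_mono (royG_int hV hk p) (royG_int hV hk p') fun ω => ?_
    by_cases h1 : V ω < p
    · simp only [if_pos h1, if_pos (h1.trans_le hpp'), le_refl]
    · simp only [if_neg h1]
      by_cases h2 : V ω < p'
      · simpa [h2] using hk0 ω
      · simp [h2]
  have heq : royG μ V h = fun p =>
      (∫ ω, (if V ω < p then max (h ω) 0 else 0) ∂μ)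
        - (∫ ω, (if V ω < p then max (-h ω) 0 else 0) ∂μ) := by
    funext p
    rw [royG, ← integral_sub (royG_int hV hpos p) (royG_int hV hneg p)]
    refine integral_congr_ae (Filter.Eventually.of_forall fun ω => ?_)
    by_cases h1 : V ω < p
    · simp [h1, max_zero_sub_max_neg_zero_eq_self]
    · simp [h1]
  rw [heq]
  exact ((hm _ hpos fun ω => le_max_right _ _).measurable).sub
    ((hm _ hneg fun ω => le_max_right _ _).measurable)

lemma royG_bound {Ω : Type*} [MeasurableSpace Ω] {μ : Measure Ω}
    {V h : Ω → ℝ} (hV : Measurable V) (hh : Integrable h μ) (p : ℝ) :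
    ‖royG μ V h p‖ ≤ ∫ ω, ‖h ω‖ ∂μ := by
  refine (norm_integral_le_integral_norm _).trans ?_
  refine integral_mono ((royG_int hV hh p).norm) hh.norm fun ω => ?_
  by_cases h1 : V ω < p
  · simp [h1]
  · simp [h1]

lemma roy_shift {Ω : Type*} [MeasurableSpace Ω] (μ : Measure Ω) [IsProbabilityMeasure μ]
    (US : Ω → ℝ) (hUS : Measurable US) (habs : Measure.map US μ ≪ volume)
    (F : ℝ → ℝ) (hF : ∀ t, F t = (μ {ω | US ω ≤ t}).toReal)
    (h : Ω → ℝ) (t : ℝ) (hnull : μ {ω | US ω < t ∧ F (US ω) = F t} = 0)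
    (hmono : Monotone F) :
    ∫ ω, (if US ω < t then h ω else 0) ∂μ = ∫ ω, (if F (US ω) < F t then h ω else 0) ∂μ := by
  refine integral_congr_ae ?_
  have hae : ∀ᵐ ω ∂μ, ω ∉ {ω | US ω < t ∧ F (US ω) = F t} :=
    measure_eq_zero_iff_ae_notMem.mp hnull
  filter_upwards [hae] with ω hω
  by_cases h1 : US ω < t
  · have h2 : F (US ω) ≤ F t := hmono h1.le
    have h3 : F (US ω) ≠ F t := fun hc => hω ⟨h1, hc⟩
    rw [if_pos h1, if_pos (lt_of_le_of_ne h2 h3)]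
  · have h2 : F t ≤ F (US ω) := hmono (not_lt.mp h1)
    rw [if_neg h1, if_neg (not_lt.mpr h2)]

lemma roy_indep_fubini {Ω α β : Type*} [MeasurableSpace Ω] [MeasurableSpace α]
    [MeasurableSpace β] (μ : Measure Ω) [IsProbabilityMeasure μ] {A : Ω → α} {W : Ω → β}
    (hA : Measurable A) (hW : Measurable W) (hind : IndepFun A W μ)
    (Φ : α × β → ℝ) (hΦ : Measurable Φ) (hint : Integrable (fun ω => Φ (A ω, W ω)) μ) :
    ∫ ω, Φ (A ω, W ω) ∂μ = ∫ ω, (∫ a, Φ (a, W ω) ∂(μ.map A)) ∂μ := by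
  have hpair : Measurable (fun ω => (A ω, W ω)) := hA.prodMk hW
  have hprod : μ.map (fun ω => (A ω, W ω)) = (μ.map A).prod (μ.map W) :=
    (indepFun_iff_map_prod_eq_prod_map_map hA.aemeasurable hW.aemeasurable).mp hind
  haveI : IsProbabilityMeasure (μ.map A) := Measure.isProbabilityMeasure_map hA.aemeasurable
  haveI : IsProbabilityMeasure (μ.map W) := Measure.isProbabilityMeasure_map hW.aemeasurable
  have hΦint : Integrable Φ ((μ.map A).prod (μ.map W)) := by
    rw [← hprod]
    exact (integrable_map_measure hΦ.aestronglyMeasurable hpair.aemeasurable).mpr hint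
  calc ∫ ω, Φ (A ω, W ω) ∂μ
      = ∫ q, Φ q ∂(μ.map (fun ω => (A ω, W ω))) :=
        (integral_map hpair.aemeasurable hΦ.aestronglyMeasurable).symm
    _ = ∫ q, Φ q ∂((μ.map A).prod (μ.map W)) := by rw [hprod]
    _ = ∫ b, (∫ a, Φ (a, b) ∂(μ.map A)) ∂(μ.map W) := integral_prod_symm Φ hΦint
    _ = ∫ ω, (∫ a, Φ (a, W ω) ∂(μ.map A)) ∂μ :=
        integral_map hW.aemeasurable (hΦ.stronglyMeasurable.integral_prod_left').aestronglyMeasurable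


/-- Generalized Roy model: `S = 1{μ_S(Z) − U_S > 0}`, `V = F_{U_S}(U_S)`,
`P = F_{U_S}(μ_S(Z))`, `U = S·U1 + (1−S)·U0`. Under Assumption 1 (independence of
`(U1, U_S)` and `(U0, U_S)` from `(Z, X)`, absolute continuity of the distribution of
`U_S`, finite first moments of `U1, U0`, and `0 < Pr(S = 1 | Z) < 1`), one has
`E[S·U1 + (1−S)·U0 | X, P = p] = E[U | P = p]`, i.e. the conditional expectation of `U`
given `(X, P)` does not depend on `X`. -/
theorem statement_1 {Ω 𝒳 𝒵 : Type*} [MeasurableSpace Ω] [MeasurableSpace 𝒳]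
    [MeasurableSpace 𝒵] (μ : Measure Ω) [IsProbabilityMeasure μ]
    (X : Ω → 𝒳) (Z : Ω → 𝒵) (U0 U1 US : Ω → ℝ)
    (hX : Measurable X) (hZ : Measurable Z)
    (hU0 : Measurable U0) (hU1 : Measurable U1) (hUS : Measurable US)
    (μS : 𝒵 → ℝ) (hμS : Measurable μS)
    -- Assumption 1(2): independence of the unobservables from (Z, X)
    (hindep1 : IndepFun (fun ω => (U1 ω, US ω)) (fun ω => (Z ω, X ω)) μ)
    (hindep0 : IndepFun (fun ω => (U0 ω, US ω)) (fun ω => (Z ω, X ω)) μ)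
    -- Assumption 1(3): the distribution of U_S is absolutely continuous
    (habs : Measure.map US μ ≪ volume)
    -- Assumption 1(4): finite first moments
    (hU0int : Integrable U0 μ) (hU1int : Integrable U1 μ)
    -- the cdf of U_S, the unobserved propensity V, the propensity score P,
    -- the treatment indicator S and the composite error U
    (F : ℝ → ℝ) (hF : ∀ t, F t = (μ {ω | US ω ≤ t}).toReal)
    (V P S U : Ω → ℝ)
    (hV : ∀ ω, V ω = F (US ω))
    (hP : ∀ ω, P ω = F (μS (Z ω)))
    (hS : ∀ ω, S ω = if US ω < μS (Z ω) then 1 else 0)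
    (hU : ∀ ω, U ω = S ω * U1 ω + (1 - S ω) * U0 ω)
    -- Assumption 1(5): 0 < Pr(S = 1 | Z) < 1
    (hsel : ∀ᵐ ω ∂μ, 0 < (μ[S | MeasurableSpace.comap Z inferInstance]) ω
        ∧ (μ[S | MeasurableSpace.comap Z inferInstance]) ω < 1) :
    μ[U | MeasurableSpace.comap (fun ω => (X ω, P ω)) inferInstance]
      =ᵐ[μ] μ[U | MeasurableSpace.comap P inferInstance] := by
  classical
  -- basic facts about F and P
  have hfin : ∀ s : ℝ, μ {ω | US ω ≤ s} ≠ ⊤ := fun s => measure_ne_top μ _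
  have hmonoF : Monotone F := fun a b hab => by
    rw [hF a, hF b]
    exact ENNReal.toReal_mono (hfin b) (measure_mono fun ω h => le_trans h hab)
  have hFmeas : Measurable F := hmonoF.measurable
  have hPfun : P = fun ω => F (μS (Z ω)) := funext hP
  have hPm : Measurable P := by rw [hPfun]; exact hFmeas.comp (hμS.comp hZ)
  have hVm : Measurable (fun ω => F (US ω)) := hFmeas.comp hUS
  -- the candidate function g
  set g1 : ℝ → ℝ := royG μ (fun ω => F (US ω)) U1 with hg1def
  set g0 : ℝ → ℝ := fun p => (∫ ω, U0 ω ∂μ) - royG μ (fun ω => F (US ω)) U0 p with hg0def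
  set g : ℝ → ℝ := fun p => g1 p + g0 p with hgdef
  have hg1m : Measurable g1 := royG_measurable hVm hU1int
  have hg0m : Measurable g0 := measurable_const.sub (royG_measurable hVm hU0int)
  have hgm : Measurable g := hg1m.add hg0m
  -- bounds
  set C1 : ℝ := ∫ ω, ‖U1 ω‖ ∂μ with hC1def
  set C0 : ℝ := ‖∫ ω, U0 ω ∂μ‖ + ∫ ω, ‖U0 ω‖ ∂μ with hC0def
  have hg1b : ∀ p, ‖g1 p‖ ≤ C1 := fun p => royG_bound hVm hU1int p
  have hg0b : ∀ p, ‖g0 p‖ ≤ C0 := fun p => by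
    rw [hg0def]
    exact (norm_sub_le _ _).trans (add_le_add le_rfl (royG_bound hVm hU0int p))
  have hgb : ∀ p, ‖g p‖ ≤ C1 + C0 := fun p =>
    (norm_add_le _ _).trans (add_le_add (hg1b p) (hg0b p))
  have hgPint : Integrable (fun ω => g (P ω)) μ :=
    Integrable.mono' (integrable_const (C1 + C0)) ((hgm.comp hPm).aestronglyMeasurable)
      (Filter.Eventually.of_forall fun ω => hgb (P ω))
  -- U as an if-then-else, and its integrability
  have hUval : ∀ ω, U ω = (if US ω < μS (Z ω) then U1 ω else U0 ω) := by
    intro ω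
    rw [hU, hS]
    by_cases h : US ω < μS (Z ω) <;> simp [h]
  have hUfun : U = fun ω => (if US ω < μS (Z ω) then U1 ω else U0 ω) := funext hUval
  have hUint : Integrable U μ := by
    rw [hUfun]
    refine Integrable.mono' (hU1int.norm.add hU0int.norm)
      ((Measurable.ite (measurableSet_lt hUS (hμS.comp hZ)) hU1 hU0).aestronglyMeasurable)
      (Filter.Eventually.of_forall fun ω => ?_)
    by_cases h : US ω < μS (Z ω)
    · simp only [if_pos h]
      exact le_add_of_le_of_nonneg le_rfl (norm_nonneg _)
    · simp only [if_neg h]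
      exact le_add_of_nonneg_of_le (norm_nonneg _) le_rfl
  -- the two shift identities
  have hshift1 : ∀ t : ℝ, ∫ ω, (if US ω < t then U1 ω else 0) ∂μ = g1 (F t) := fun t =>
    roy_shift μ US hUS habs F hF U1 t (roy_level_null μ US hUS habs F hF t) hmonoF
  have hshift0 : ∀ t : ℝ, ∫ ω, (if US ω < t then (0:ℝ) else U0 ω) ∂μ = g0 (F t) := by
    intro t
    have h1 : ∀ ω, (if US ω < t then (0:ℝ) else U0 ω)
        = U0 ω - (if US ω < t then U0 ω else 0) := by
      intro ω; by_cases h : US ω < t <;> simp [h]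
    rw [integral_congr_ae (Filter.Eventually.of_forall h1),
      integral_sub hU0int (royG_int hUS hU0int t),
      roy_shift μ US hUS habs F hF U0 t (roy_level_null μ US hUS habs F hF t) hmonoF]
    rfl
  -- measurable pair maps
  have hA1 : Measurable (fun ω => (U1 ω, US ω)) := hU1.prodMk hUS
  have hA0 : Measurable (fun ω => (U0 ω, US ω)) := hU0.prodMk hUS
  have hW : Measurable (fun ω => (Z ω, X ω)) := hZ.prodMk hX
  -- the central identity
  have key : ∀ B : Set (𝒳 × ℝ), MeasurableSet B →
      ∫ ω in (fun ω => (X ω, P ω)) ⁻¹' B, U ω ∂μ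
        = ∫ ω in (fun ω => (X ω, P ω)) ⁻¹' B, g (P ω) ∂μ := by
    intro B hB
    have hsmeas : MeasurableSet ((fun ω => (X ω, P ω)) ⁻¹' B) := (hX.prodMk hPm) hB
    set χ : Ω → ℝ := fun ω => if (X ω, P ω) ∈ B then 1 else 0 with hχdef
    have hχm : Measurable χ := Measurable.ite hsmeas measurable_const measurable_const
    have hχ01 : ∀ ω, ‖χ ω‖ ≤ 1 := by
      intro ω; rw [hχdef]; by_cases h : (X ω, P ω) ∈ B <;> simp [h]
    have hT1int : Integrable (fun ω => χ ω * (if US ω < μS (Z ω) then U1 ω else 0)) μ := by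
      refine Integrable.mono' hU1int.norm
        ((hχm.mul (Measurable.ite (measurableSet_lt hUS (hμS.comp hZ)) hU1
          measurable_const)).aestronglyMeasurable)
        (Filter.Eventually.of_forall fun ω => ?_)
      rw [norm_mul]
      refine (mul_le_mul_of_nonneg_right (hχ01 ω) (norm_nonneg _)).trans ?_
      rw [one_mul]
      by_cases h : US ω < μS (Z ω) <;> simp [h]
    have hT0int : Integrable (fun ω => χ ω * (if US ω < μS (Z ω) then (0:ℝ) else U0 ω)) μ := by
      refine Integrable.mono' hU0int.norm
        ((hχm.mul (Measurable.ite (measurableSet_lt hUS (hμS.comp hZ)) measurable_const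
          hU0)).aestronglyMeasurable)
        (Filter.Eventually.of_forall fun ω => ?_)
      rw [norm_mul]
      refine (mul_le_mul_of_nonneg_right (hχ01 ω) (norm_nonneg _)).trans ?_
      rw [one_mul]
      by_cases h : US ω < μS (Z ω) <;> simp [h]
    -- step 1&2 : split the integral
    have hsplit : ∫ ω in (fun ω => (X ω, P ω)) ⁻¹' B, U ω ∂μ
        = (∫ ω, χ ω * (if US ω < μS (Z ω) then U1 ω else 0) ∂μ)
          + ∫ ω, χ ω * (if US ω < μS (Z ω) then (0:ℝ) else U0 ω) ∂μ := by
      rw [← integral_indicator hsmeas, ← integral_add hT1int hT0int]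
      refine integral_congr_ae (Filter.Eventually.of_forall fun ω => ?_)
      rw [Set.indicator_apply]
      by_cases hωB : (X ω, P ω) ∈ B
      · have hmem : ω ∈ (fun ω => (X ω, P ω)) ⁻¹' B := hωB
        rw [if_pos hmem, hUval ω, hχdef]
        simp only [if_pos hωB, one_mul]
        by_cases hc : US ω < μS (Z ω) <;> simp [hc]
      · have hmem : ω ∉ (fun ω => (X ω, P ω)) ⁻¹' B := hωB
        rw [if_neg hmem, hχdef]
        simp only [if_neg hωB, zero_mul, add_zero]
    -- step 3 for the U1 part
    set Φ1 : (ℝ × ℝ) × (𝒵 × 𝒳) → ℝ := fun q =>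
      (if (q.2.2, F (μS q.2.1)) ∈ B then (1:ℝ) else 0)
        * (if q.1.2 < μS q.2.1 then q.1.1 else 0) with hΦ1def
    have hΦ1m : Measurable Φ1 := by
      refine Measurable.mul ?_ ?_
      · refine Measurable.ite ?_ measurable_const measurable_const
        exact (((measurable_snd.snd).prodMk
          (hFmeas.comp (hμS.comp measurable_snd.fst)))) hB
      · refine Measurable.ite ?_ (measurable_fst.fst) measurable_const
        exact measurableSet_lt measurable_fst.snd (hμS.comp measurable_snd.fst)
    have hcomp1 : (fun ω => Φ1 ((U1 ω, US ω), (Z ω, X ω)))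
        = fun ω => χ ω * (if US ω < μS (Z ω) then U1 ω else 0) := by
      funext ω
      rw [hΦ1def, hχdef]
      simp only [← hP ω]
    have hinner1 : ∀ b : 𝒵 × 𝒳, ∫ a, Φ1 (a, b) ∂(μ.map (fun ω => (U1 ω, US ω)))
        = (if (b.2, F (μS b.1)) ∈ B then (1:ℝ) else 0) * g1 (F (μS b.1)) := by
      intro b
      simp only [hΦ1def]
      have hmap : ∫ a : ℝ × ℝ, (if a.2 < μS b.1 then a.1 else 0)
            ∂(μ.map (fun ω => (U1 ω, US ω)))
          = ∫ ω, (if US ω < μS b.1 then U1 ω else 0) ∂μ :=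
        integral_map hA1.aemeasurable
          ((Measurable.ite (measurableSet_lt measurable_snd measurable_const)
            measurable_fst measurable_const).aestronglyMeasurable)
      by_cases hb : (b.2, F (μS b.1)) ∈ B
      · simp only [if_pos hb, one_mul]
        rw [hmap, hshift1]
      · simp only [if_neg hb, zero_mul, integral_zero]
    have hstep31 : ∫ ω, χ ω * (if US ω < μS (Z ω) then U1 ω else 0) ∂μ
        = ∫ ω, χ ω * g1 (P ω) ∂μ := by
      rw [← hcomp1]
      rw [roy_indep_fubini μ hA1 hW hindep1 Φ1 hΦ1m (by rw [hcomp1]; exact hT1int)]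
      refine integral_congr_ae (Filter.Eventually.of_forall fun ω => ?_)
      simp only [hinner1, hχdef, ← hP ω]
    -- step 3 for the U0 part
    set Φ0 : (ℝ × ℝ) × (𝒵 × 𝒳) → ℝ := fun q =>
      (if (q.2.2, F (μS q.2.1)) ∈ B then (1:ℝ) else 0)
        * (if q.1.2 < μS q.2.1 then 0 else q.1.1) with hΦ0def
    have hΦ0m : Measurable Φ0 := by
      refine Measurable.mul ?_ ?_
      · refine Measurable.ite ?_ measurable_const measurable_const
        exact (((measurable_snd.snd).prodMk
          (hFmeas.comp (hμS.comp measurable_snd.fst)))) hB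
      · refine Measurable.ite ?_ measurable_const (measurable_fst.fst)
        exact measurableSet_lt measurable_fst.snd (hμS.comp measurable_snd.fst)
    have hcomp0 : (fun ω => Φ0 ((U0 ω, US ω), (Z ω, X ω)))
        = fun ω => χ ω * (if US ω < μS (Z ω) then (0:ℝ) else U0 ω) := by
      funext ω
      rw [hΦ0def, hχdef]
      simp only [← hP ω]
    have hinner0 : ∀ b : 𝒵 × 𝒳, ∫ a, Φ0 (a, b) ∂(μ.map (fun ω => (U0 ω, US ω)))
        = (if (b.2, F (μS b.1)) ∈ B then (1:ℝ) else 0) * g0 (F (μS b.1)) := by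
      intro b
      simp only [hΦ0def]
      have hmap : ∫ a : ℝ × ℝ, (if a.2 < μS b.1 then (0:ℝ) else a.1)
            ∂(μ.map (fun ω => (U0 ω, US ω)))
          = ∫ ω, (if US ω < μS b.1 then (0:ℝ) else U0 ω) ∂μ :=
        integral_map hA0.aemeasurable
          ((Measurable.ite (measurableSet_lt measurable_snd measurable_const)
            measurable_const measurable_fst).aestronglyMeasurable)
      by_cases hb : (b.2, F (μS b.1)) ∈ B
      · simp only [if_pos hb, one_mul]
        rw [hmap, hshift0]
      · simp only [if_neg hb, zero_mul, integral_zero]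
    have hstep30 : ∫ ω, χ ω * (if US ω < μS (Z ω) then (0:ℝ) else U0 ω) ∂μ
        = ∫ ω, χ ω * g0 (P ω) ∂μ := by
      rw [← hcomp0]
      rw [roy_indep_fubini μ hA0 hW hindep0 Φ0 hΦ0m (by rw [hcomp0]; exact hT0int)]
      refine integral_congr_ae (Filter.Eventually.of_forall fun ω => ?_)
      simp only [hinner0, hχdef, ← hP ω]
    -- step 4 : reassemble
    have hχg1int : Integrable (fun ω => χ ω * g1 (P ω)) μ := by
      refine Integrable.mono' (integrable_const C1)
        ((hχm.mul (hg1m.comp hPm)).aestronglyMeasurable)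
        (Filter.Eventually.of_forall fun ω => ?_)
      rw [norm_mul]
      calc ‖χ ω‖ * ‖g1 (P ω)‖ ≤ 1 * ‖g1 (P ω)‖ :=
            mul_le_mul_of_nonneg_right (hχ01 ω) (norm_nonneg _)
        _ = ‖g1 (P ω)‖ := one_mul _
        _ ≤ C1 := hg1b _
    have hχg0int : Integrable (fun ω => χ ω * g0 (P ω)) μ := by
      refine Integrable.mono' (integrable_const C0)
        ((hχm.mul (hg0m.comp hPm)).aestronglyMeasurable)
        (Filter.Eventually.of_forall fun ω => ?_)
      rw [norm_mul]
      calc ‖χ ω‖ * ‖g0 (P ω)‖ ≤ 1 * ‖g0 (P ω)‖ :=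
            mul_le_mul_of_nonneg_right (hχ01 ω) (norm_nonneg _)
        _ = ‖g0 (P ω)‖ := one_mul _
        _ ≤ C0 := hg0b _
    rw [hsplit, hstep31, hstep30, ← integral_add hχg1int hχg0int, ← integral_indicator hsmeas]
    refine integral_congr_ae (Filter.Eventually.of_forall fun ω => ?_)
    rw [Set.indicator_apply]
    by_cases hωB : (X ω, P ω) ∈ B
    · have hmem : ω ∈ (fun ω => (X ω, P ω)) ⁻¹' B := hωB
      rw [hχdef]
      simp only [if_pos hωB, if_pos hmem, one_mul, hgdef]
    · have hmem : ω ∉ (fun ω => (X ω, P ω)) ⁻¹' B := hωB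
      rw [hχdef]
      simp only [if_neg hωB, if_neg hmem, zero_mul, add_zero]
  -- conditional expectation step
  have hle_XP : MeasurableSpace.comap (fun ω => (X ω, P ω)) inferInstance
      ≤ (inferInstance : MeasurableSpace Ω) := (hX.prodMk hPm).comap_le
  have hle_P : MeasurableSpace.comap P inferInstance
      ≤ (inferInstance : MeasurableSpace Ω) := hPm.comap_le
  haveI hsf1 : SigmaFinite (μ.trim hle_XP) := by
    haveI := isFiniteMeasure_trim hle_XP (μ := μ); infer_instance
  haveI hsf2 : SigmaFinite (μ.trim hle_P) := by
    haveI := isFiniteMeasure_trim hle_P (μ := μ); infer_instance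
  have hmPmeas : Measurable[MeasurableSpace.comap P inferInstance] (fun ω => g (P ω)) :=
    hgm.comp (Measurable.of_comap_le le_rfl)
  have hle : MeasurableSpace.comap P inferInstance
      ≤ MeasurableSpace.comap (fun ω => (X ω, P ω)) inferInstance := by
    rintro s ⟨B', hB', rfl⟩
    exact ⟨Set.univ ×ˢ B', MeasurableSet.univ.prod hB', by ext ω; simp⟩
  have hmXPmeas : Measurable[MeasurableSpace.comap (fun ω => (X ω, P ω)) inferInstance]
      (fun ω => g (P ω)) := hmPmeas.mono hle le_rfl
  have h1 : (fun ω => g (P ω))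
      =ᵐ[μ] μ[U | MeasurableSpace.comap (fun ω => (X ω, P ω)) inferInstance] := by
    refine ae_eq_condExp_of_forall_setIntegral_eq hle_XP hUint
      (fun s hs _ => hgPint.integrableOn)
      (fun s hs _ => ?_) (hmXPmeas.stronglyMeasurable.aestronglyMeasurable)
    obtain ⟨B, hB, rfl⟩ := MeasurableSpace.measurableSet_comap.mp hs
    exact (key B hB).symm
  have h2 : (fun ω => g (P ω))
      =ᵐ[μ] μ[U | MeasurableSpace.comap P inferInstance] := by
    refine ae_eq_condExp_of_forall_setIntegral_eq hle_P hUint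
      (fun s hs _ => hgPint.integrableOn)
      (fun s hs _ => ?_) (hmPmeas.stronglyMeasurable.aestronglyMeasurable)
    obtain ⟨B', hB', rfl⟩ := MeasurableSpace.measurableSet_comap.mp hs
    have hseteq : P ⁻¹' B' = (fun ω => (X ω, P ω)) ⁻¹' (Set.univ ×ˢ B') := by
      ext ω; simp
    rw [hseteq]
    exact (key _ (MeasurableSet.univ.prod hB')).symm
  exact h1.symm.trans h2
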